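/- arXiv:2208.03539 — 2 statements merged into one kernel-verified Lean document; each statement's English description precedes it below -/
import Mathlib

section
/- Fix a positive integer m and work in the polynomial ring ℤ[α] in the indeterminates α_m, α_{m+1}, …. Then the matrix Ŝ^{(m)} = (Ŝ^{(m)}_{n,j}(α))_{n,j∈ℕ} = (D((m+1)n + j, j))_{n,j∈ℕ} of modified m-Stieltjes–Rogers polynomials is totally positive with respect to the coefficientwise order on ℤ[α]: for every p ≥ 1 and all strictly increasing tuples n_1 < ⋯ < n_p and j_1 < ⋯ < j_p in ℕ, every coefficient of det((Ŝ^{(m)}_{n_a, j_b}(α))_{1≤a,b≤p}) is a nonnegative integer. -/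
open Finset
open Matrix

/-- `dyckD m α x y` is the generating polynomial of partial `m`-Dyck paths from `(0,0)` to
`(x,y)`: paths using steps `(1,1)` of weight `1` and `(1,-m)` of weight `α i` when the fall
starts at height `i`. -/
def dyckD {R : Type*} [CommRing R] (m : ℕ) (α : ℕ → R) : ℕ → ℕ → R
  | 0, 0 => 1
  | 0, _ + 1 => 0
  | x + 1, 0 => α m * dyckD m α x m
  | x + 1, y + 1 => dyckD m α x y + α (y + 1 + m) * dyckD m α x (y + 1 + m)

variable {R : Type*} [CommRing R]

lemma dyckD_eq_zero (m : ℕ) (α : ℕ → R) : ∀ x y, x < y → dyckD m α x y = 0 := by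
  intro x
  induction x with
  | zero => intro y hy; match y, hy with
    | y + 1, _ => rfl
  | succ x ih =>
    intro y hy
    match y, hy with
    | y + 1, hy =>
      rw [dyckD, ih y (by omega), ih (y + 1 + m) (by omega), mul_zero, add_zero]

/-- `Ŝ^{(m)}_{n,j}`. -/
def Shat (m : ℕ) (α : ℕ → R) (n j : ℕ) : R := dyckD m α ((m + 1) * n + j) j

lemma Shat_zero (m : ℕ) (α : ℕ → R) (j : ℕ) : Shat m α 0 j = 1 := by
  unfold Shat
  rw [Nat.mul_zero, Nat.zero_add]
  induction j with
  | zero => rfl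
  | succ j ih =>
    rw [dyckD, ih, dyckD_eq_zero m α j (j + 1 + m) (by omega), mul_zero, add_zero]

lemma Shat_succ (m : ℕ) (α : ℕ → R) (n j : ℕ) :
    Shat m α (n + 1) j = ∑ k ∈ Icc m (j + m), α k * Shat m α n k := by
  induction j with
  | zero =>
    have h1 : (m + 1) * (n + 1) + 0 = ((m + 1) * n + m) + 1 := by ring
    have h2 : Icc m (0 + m) = {m} := by rw [Nat.zero_add, Icc_self]
    rw [Shat, h1, dyckD, h2, Finset.sum_singleton, Shat]
  | succ j ih =>
    have h1 : (m + 1) * (n + 1) + (j + 1) = ((m + 1) * (n + 1) + j) + 1 := by ring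
    have h2 : (m + 1) * (n + 1) + j = (m + 1) * n + (j + 1 + m) := by ring
    rw [Shat, h1, dyckD, ← Shat, ih, h2, ← Shat,
      show j + 1 + m = j + m + 1 from by omega,
      Finset.sum_Icc_succ_top (by omega : m ≤ j + m + 1)]

variable {R : Type*} [CommRing R]

/-- Step 1: expand det of a product-submatrix by multilinearity in columns. -/
lemma det_mul_submatrix_expand {p N : ℕ} (A B : Matrix (Fin N) (Fin N) R)
    (r c : Fin p → Fin N) :
    ((A * B).submatrix r c).det =
      ∑ f : Fin p → Fin N, (∏ b, B (f b) (c b)) * (A.submatrix r f).det := by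
  rw [← Matrix.det_transpose]
  have h1 : ((A * B).submatrix r c)ᵀ =
      fun b => ∑ k : Fin N, B k (c b) • (fun a => A (r a) k) := by
    ext b a
    simp [Matrix.mul_apply, Finset.sum_apply, mul_comm]
  rw [Matrix.det, h1]
  have h3 := MultilinearMap.map_sum
    (Matrix.detRowAlternating : (Fin p → R) [⋀^Fin p]→ₗ[R] R).toMultilinearMap
    (g := fun b (k : Fin N) => B k (c b) • fun a => A (r a) k)
  simp only [AlternatingMap.coe_multilinearMap] at h3
  rw [h3]
  refine Finset.sum_congr rfl fun f _ => ?_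
  have h4 := MultilinearMap.map_smul_univ
    (Matrix.detRowAlternating : (Fin p → R) [⋀^Fin p]→ₗ[R] R).toMultilinearMap
    (fun b => B (f b) (c b)) (fun b => fun a => A (r a) (f b))
  simp only [AlternatingMap.coe_multilinearMap] at h4
  rw [h4]
  have h2 : (Matrix.detRowAlternating fun b a => A (r a) (f b)) = (A.submatrix r f)ᵀ.det := rfl
  rw [smul_eq_mul, h2, Matrix.det_transpose]

/-- The increasing enumeration of a `p`-subset of `Fin N`. -/
def cbEmb {N p : ℕ} (s : {x : Finset (Fin N) // x ∈ (univ : Finset (Fin N)).powersetCard p}) :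
    Fin p → Fin N :=
  s.1.orderEmbOfFin (Finset.mem_powersetCard.mp s.2).2

lemma cbEmb_strictMono {N p : ℕ}
    (s : {x : Finset (Fin N) // x ∈ (univ : Finset (Fin N)).powersetCard p}) :
    StrictMono (cbEmb s) :=
  (s.1.orderEmbOfFin _).strictMono

lemma exists_pair {p N : ℕ} (f : Fin p → Fin N) (hf : Function.Injective f) :
    ∃ (s : Finset (Fin N)) (hs : s.card = p) (σ : Equiv.Perm (Fin p)),
      (s.orderEmbOfFin hs) ∘ σ = f ∧ s = Finset.image f univ := by
  set s := Finset.image f univ with hsdef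
  have hs : s.card = p := by
    rw [hsdef, Finset.card_image_of_injective _ hf, Finset.card_univ, Fintype.card_fin]
  have memb : ∀ b, f b ∈ s := fun b => Finset.mem_image_of_mem f (Finset.mem_univ b)
  set g : Fin p → Fin p := fun b => (s.orderIsoOfFin hs).symm ⟨f b, memb b⟩ with hg
  have ginj : Function.Injective g := by
    intro b b' h
    apply hf
    have h2 : (⟨f b, memb b⟩ : s) = ⟨f b', memb b'⟩ := by
      simpa [hg] using congrArg (s.orderIsoOfFin hs) h
    exact congrArg Subtype.val h2
  refine ⟨s, hs, Equiv.ofBijective g ((Fintype.bijective_iff_injective_and_card g).mpr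
    ⟨ginj, rfl⟩), ?_, hsdef⟩
  funext b
  show s.orderEmbOfFin hs (g b) = f b
  rw [← Finset.coe_orderIsoOfFin_apply, hg]
  simp only [OrderIso.apply_symm_apply]

lemma image_cbEmb {p N : ℕ}
    (s : {x : Finset (Fin N) // x ∈ (univ : Finset (Fin N)).powersetCard p})
    (σ : Equiv.Perm (Fin p)) :
    Finset.image (cbEmb s ∘ σ) univ = s.1 := by
  ext x
  simp only [Finset.mem_image, Function.comp_apply, Finset.mem_univ, true_and]
  constructor
  · rintro ⟨b, rfl⟩; exact Finset.orderEmbOfFin_mem _ _ _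
  · intro hx
    have : x ∈ Set.range (cbEmb s) := by
      rw [cbEmb, Finset.range_orderEmbOfFin]; exact hx
    obtain ⟨b, rfl⟩ := this
    exact ⟨σ.symm b, by simp⟩

theorem cauchy_binet {p N : ℕ} (A B : Matrix (Fin N) (Fin N) R) (r c : Fin p → Fin N) :
    ((A * B).submatrix r c).det =
      ∑ s ∈ ((univ : Finset (Fin N)).powersetCard p).attach,
        (A.submatrix r (cbEmb s)).det * (B.submatrix (cbEmb s) c).det := by
  classical
  rw [det_mul_submatrix_expand]
  rw [← Finset.sum_filter_add_sum_filter_not univ (fun f : Fin p → Fin N => Function.Injective f)]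
  have hzero : ∀ f ∈ univ.filter (fun f : Fin p → Fin N => ¬ Function.Injective f),
      (∏ b, B (f b) (c b)) * (A.submatrix r f).det = 0 := by
    intro f hfmem
    have hf : ¬ Function.Injective f := (Finset.mem_filter.mp hfmem).2
    rw [Function.not_injective_iff] at hf
    obtain ⟨b, b', hbb, hne⟩ := hf
    have : (A.submatrix r f).det = 0 :=
      Matrix.det_zero_of_column_eq hne (fun a => by simp [Matrix.submatrix_apply, hbb])
    rw [this, mul_zero]
  rw [Finset.sum_eq_zero hzero, add_zero]
  have hbij : ∑ f ∈ univ.filter (fun f : Fin p → Fin N => Function.Injective f),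
      (∏ b, B (f b) (c b)) * (A.submatrix r f).det =
      ∑ x ∈ (((univ : Finset (Fin N)).powersetCard p).attach ×ˢ
          (univ : Finset (Equiv.Perm (Fin p)))),
        (∏ b, B ((cbEmb x.1 ∘ x.2) b) (c b)) * (A.submatrix r (cbEmb x.1 ∘ x.2)).det := by
    refine (Finset.sum_bij (i := fun x _ => cbEmb x.1 ∘ x.2) ?_ ?_ ?_ ?_).symm
    · intro x _
      refine Finset.mem_filter.mpr ⟨Finset.mem_univ _, ?_⟩
      exact (x.1.1.orderEmbOfFin _).injective.comp x.2.injective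
    · intro x _ y _ h
      have h' : cbEmb x.1 ∘ x.2 = cbEmb y.1 ∘ y.2 := h
      have hs : x.1.1 = y.1.1 := by
        rw [← image_cbEmb x.1 x.2, ← image_cbEmb y.1 y.2, h']
      have hx1 : x.1 = y.1 := Subtype.ext hs
      obtain ⟨x1, x2⟩ := x
      obtain ⟨y1, y2⟩ := y
      cases hx1
      simp only [Prod.mk.injEq, true_and]
      refine Equiv.ext fun b => ?_
      have := congrFun h b
      exact (x1.1.orderEmbOfFin _).injective this
    · intro f hfmem
      have hf : Function.Injective f := (Finset.mem_filter.mp hfmem).2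
      obtain ⟨s, hs, σ, hkey, -⟩ := exists_pair f hf
      have hsmem : s ∈ (univ : Finset (Fin N)).powersetCard p :=
        Finset.mem_powersetCard.mpr ⟨Finset.subset_univ _, hs⟩
      refine ⟨(⟨s, hsmem⟩, σ), Finset.mem_product.mpr ⟨Finset.mem_attach _ _, Finset.mem_univ _⟩, ?_⟩
      show cbEmb ⟨s, hsmem⟩ ∘ σ = f
      exact hkey
    · intro x _; rfl
  rw [hbij, Finset.sum_product]
  refine Finset.sum_congr rfl fun s _ => ?_
  -- inner: sum over permutations
  have hsub : ∀ σ : Equiv.Perm (Fin p),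
      A.submatrix r (cbEmb s ∘ σ) = (A.submatrix r (cbEmb s)).submatrix id σ := by
    intro σ; rw [Matrix.submatrix_submatrix]; rfl
  calc ∑ σ : Equiv.Perm (Fin p),
        (∏ b, B ((cbEmb s ∘ σ) b) (c b)) * (A.submatrix r (cbEmb s ∘ σ)).det
      = ∑ σ : Equiv.Perm (Fin p),
        (A.submatrix r (cbEmb s)).det *
          (((Equiv.Perm.sign σ : ℤ) : R) * ∏ b, B (cbEmb s (σ b)) (c b)) := by
        refine Finset.sum_congr rfl fun σ _ => ?_
        rw [hsub σ, Matrix.det_permute']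
        simp only [Function.comp_apply]
        push_cast
        ring
    _ = (A.submatrix r (cbEmb s)).det * (B.submatrix (cbEmb s) c).det := by
        rw [← Finset.mul_sum]
        congr 1
        rw [Matrix.det_apply']
        simp only [Matrix.submatrix_apply]

variable {R : Type*} [CommRing R]

lemma staircase_det_mem (S : Subsemiring R) (m : ℕ) :
    ∀ (p : ℕ) (u v : Fin p → ℕ), StrictMono u → StrictMono v →
      (Matrix.of fun a b => if u a ≤ v b + m then (1 : R) else 0).det ∈ S := by
  intro p
  induction p with
  | zero =>
    intro u v _ _
    rw [Matrix.det_fin_zero]; exact one_mem S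
  | succ q ih =>
    intro u v hu hv
    set M : Matrix (Fin (q+1)) (Fin (q+1)) R :=
      Matrix.of fun a b => if u a ≤ v b + m then (1 : R) else 0 with hM
    by_cases h00 : u 0 ≤ v 0 + m
    · by_cases hrow : ∃ a : Fin (q+1), a ≠ 0 ∧ u a ≤ v 0 + m
      · obtain ⟨a, ha0, ha⟩ := hrow
        have hrows : M 0 = M a := by
          funext b
          have h0b : u 0 ≤ v b + m :=
            le_trans h00 (by have := hv.monotone (Fin.zero_le b); omega)
          have hab : u a ≤ v b + m :=
            le_trans ha (by have := hv.monotone (Fin.zero_le b); omega)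
          simp [hM, h0b, hab]
        rw [Matrix.det_zero_of_row_eq (Ne.symm ha0) hrows]
        exact zero_mem S
      · push_neg at hrow
        have hcol : ∀ a : Fin (q+1), a ≠ 0 → M a 0 = 0 := by
          intro a ha
          have := hrow a ha
          simp [hM, this]
        rw [Matrix.det_succ_column_zero]
        rw [Finset.sum_eq_single 0]
        · have hM00 : M 0 0 = 1 := by simp [hM, h00]
          rw [hM00, Fin.succAbove_zero]
          have : (M.submatrix Fin.succ Fin.succ).det ∈ S := by
            have := ih (u ∘ Fin.succ) (v ∘ Fin.succ)
              (hu.comp Fin.strictMono_succ) (hv.comp Fin.strictMono_succ)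
            convert this using 2
            rfl
          simpa using this
        · intro a _ ha
          rw [hcol a ha, mul_zero, zero_mul]
        · intro h; exact absurd (Finset.mem_univ 0) h
    · have hcol : ∀ a : Fin (q+1), M a 0 = 0 := by
        intro a
        have h1 : u 0 ≤ u a := hu.monotone (Fin.zero_le a)
        have : ¬ u a ≤ v 0 + m := by omega
        simp [hM, this]
      rw [Matrix.det_eq_zero_of_column_eq_zero 0 hcol]
      exact zero_mem S

section TPMachinery

variable {R : Type*} [CommRing R]

/-- The staircase 0/1 matrix `U_{k,j} = [k ≤ j + m]` on `Fin (N+1)`. -/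
def Umat (m N : ℕ) : Matrix (Fin (N+1)) (Fin (N+1)) R :=
  Matrix.of fun k j => if (k : ℕ) ≤ (j : ℕ) + m then (1 : R) else 0

/-- Diagonal matrix with entries `α k` for `k ≥ m`, else `0`. -/
def Dmat (m N : ℕ) (α : ℕ → R) : Matrix (Fin (N+1)) (Fin (N+1)) R :=
  Matrix.diagonal fun k => if m ≤ (k : ℕ) then α (k : ℕ) else 0

def Qmat (m N : ℕ) (α : ℕ → R) : Matrix (Fin (N+1)) (Fin (N+1)) R :=
  Umat m N * Dmat m N α

def Pmat (m N : ℕ) (α : ℕ → R) : Matrix (Fin (N+1)) (Fin (N+1)) R :=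
  Dmat m N α * Umat m N

/-- The output matrix: row `n` is `e₀ Qⁿ`. -/
def Ofull (m N : ℕ) (α : ℕ → R) : Matrix (Fin (N+1)) (Fin (N+1)) R :=
  Matrix.of fun n j => ((Qmat m N α) ^ (n : ℕ)) 0 j

lemma Umat_minor_mem (S : Subsemiring R) (m N p : ℕ) (r c : Fin p → Fin (N+1))
    (hr : StrictMono r) (hc : StrictMono c) :
    ((Umat m N (R := R)).submatrix r c).det ∈ S := by
  have h : (Umat m N (R := R)).submatrix r c =
      Matrix.of fun a b => if ((r a : ℕ)) ≤ ((c b : ℕ)) + m then (1 : R) else 0 := by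
    ext a b; rfl
  rw [h]
  exact staircase_det_mem S m p (fun a => (r a : ℕ)) (fun b => (c b : ℕ))
    (Fin.val_strictMono.comp hr) (Fin.val_strictMono.comp hc)

lemma Qmat_minor_mem (S : Subsemiring R) (m N : ℕ) (α : ℕ → R) (hα : ∀ i, α i ∈ S)
    (p : ℕ) (r c : Fin p → Fin (N+1)) (hr : StrictMono r) (hc : StrictMono c) :
    ((Qmat m N α).submatrix r c).det ∈ S := by
  have h : (Qmat m N α).submatrix r c =
      ((Umat m N).submatrix r c) * Matrix.diagonal
        (fun b => if m ≤ (c b : ℕ) then α (c b : ℕ) else 0) := by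
    ext a b
    simp only [Matrix.submatrix_apply, Qmat, Dmat, Matrix.mul_diagonal]
  rw [h, Matrix.det_mul, Matrix.det_diagonal]
  refine mul_mem (Umat_minor_mem S m N p r c hr hc) (prod_mem fun b _ => ?_)
  split_ifs
  · exact hα _
  · exact zero_mem S

lemma Ofull_mul_Q (m N : ℕ) (α : ℕ → R) (t j : Fin (N+1)) :
    (Ofull m N α * Qmat m N α) t j = ((Qmat m N α) ^ ((t : ℕ) + 1)) 0 j := by
  rw [pow_succ, Matrix.mul_apply, Matrix.mul_apply]
  rfl

lemma Ofull_minor_mem (S : Subsemiring R) (m N : ℕ) (α : ℕ → R) (hα : ∀ i, α i ∈ S) :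
    ∀ (t p : ℕ) (r c : Fin p → Fin (N+1)), StrictMono r → StrictMono c →
      (∑ a, (r a : ℕ)) + p ≤ t → ((Ofull m N α).submatrix r c).det ∈ S := by
  intro t
  induction t with
  | zero =>
    intro p r c _ _ hle
    match p, r, c, hle with
    | 0, r, c, _ => rw [Matrix.det_fin_zero]; exact one_mem S
  | succ t ih =>
    intro p r c hr hc hle
    match p, r, c, hr, hc, hle with
    | 0, r, c, _, _, _ => rw [Matrix.det_fin_zero]; exact one_mem S
    | q + 1, r, c, hr, hc, hle =>
      by_cases h0 : (r 0 : ℕ) = 0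
      · by_cases hc0 : (c 0 : ℕ) = 0
        · -- expand along the first row, which is `e₀`
          set M := (Ofull m N α).submatrix r c with hMdef
          have hrow : ∀ b : Fin (q+1), M 0 b = if (0 : Fin (N+1)) = c b then 1 else 0 := by
            intro b
            have : M 0 b = ((Qmat m N α) ^ ((r 0 : ℕ))) 0 (c b) := rfl
            rw [this, h0, pow_zero, Matrix.one_apply]
          rw [Matrix.det_succ_row_zero, Finset.sum_eq_single 0]
          · have h1 : M 0 0 = 1 := by
              rw [hrow 0, if_pos (Fin.ext hc0.symm)]
            rw [h1, Fin.succAbove_zero]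
            have h2 : M.submatrix Fin.succ Fin.succ =
                (Ofull m N α).submatrix (r ∘ Fin.succ) (c ∘ Fin.succ) := rfl
            have h3 : (∑ a, ((r ∘ Fin.succ) a : ℕ)) + q ≤ t := by
              have hsplit : ∑ a : Fin (q+1), (r a : ℕ)
                  = (r 0 : ℕ) + ∑ a : Fin q, ((r ∘ Fin.succ) a : ℕ) :=
                Fin.sum_univ_succ _
              omega
            have := ih q (r ∘ Fin.succ) (c ∘ Fin.succ)
              (hr.comp Fin.strictMono_succ) (hc.comp Fin.strictMono_succ) h3
            rw [h2]
            simpa using this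
          · intro b _ hb
            have hcb : (0 : Fin (N+1)) ≠ c b := by
              intro hh
              have h4 : c 0 < c b := hc (Fin.pos_of_ne_zero hb)
              have : (c 0 : ℕ) < (c b : ℕ) := h4
              have h5 := congrArg Fin.val hh
              simp at h5
              omega
            rw [hrow b, if_neg hcb, mul_zero, zero_mul]
          · intro h; exact absurd (Finset.mem_univ 0) h
        · -- first row is identically zero
          refine (by
            rw [Matrix.det_eq_zero_of_row_eq_zero 0]
            · exact zero_mem S
            · intro b
              have : ((Ofull m N α).submatrix r c) 0 b =
                  if (0 : Fin (N+1)) = c b then 1 else 0 := by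
                have h' : ((Ofull m N α).submatrix r c) 0 b =
                    ((Qmat m N α) ^ ((r 0 : ℕ))) 0 (c b) := rfl
                rw [h', h0, pow_zero, Matrix.one_apply]
              rw [this, if_neg]
              intro hh
              have h5 := congrArg Fin.val hh
              simp at h5
              have h6 : c 0 ≤ c b := (hc.monotone (Fin.zero_le b))
              have : (c 0 : ℕ) ≤ (c b : ℕ) := h6
              omega : ((Ofull m N α).submatrix r c).det ∈ S)
      · -- all rows positive: peel one factor of Q
        have h1 : ∀ a, 1 ≤ (r a : ℕ) := by
          intro a
          have h2 : r 0 ≤ r a := hr.monotone (Fin.zero_le a)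
          have : (r 0 : ℕ) ≤ (r a : ℕ) := h2
          omega
        set r' : Fin (q+1) → Fin (N+1) := fun a => ⟨(r a : ℕ) - 1, by omega⟩ with hr'def
        have hr' : StrictMono r' := by
          intro a b hab
          have : (r a : ℕ) < (r b : ℕ) := hr hab
          have h1a := h1 a
          simp only [hr'def, Fin.mk_lt_mk]
          omega
        have hkey : (Ofull m N α).submatrix r c =
            (Ofull m N α * Qmat m N α).submatrix r' c := by
          ext a b
          rw [Matrix.submatrix_apply, Matrix.submatrix_apply, Ofull_mul_Q]
          have h2 : ((r' a : ℕ)) + 1 = (r a : ℕ) := by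
            simp only [hr'def]; have := h1 a; omega
          rw [h2]
          rfl
        rw [hkey, cauchy_binet]
        refine sum_mem fun s _ => mul_mem ?_ ?_
        · refine ih (q + 1) r' (cbEmb s) hr' (cbEmb_strictMono s) ?_
          have hsum0 : ∀ a, (r a : ℕ) = (r' a : ℕ) + 1 := by
            intro a
            have := h1 a
            simp only [hr'def]
            omega
          have hsum : (∑ a, (r a : ℕ)) = (∑ a, (r' a : ℕ)) + (q + 1) := by
            calc (∑ a, (r a : ℕ)) = ∑ a : Fin (q+1), ((r' a : ℕ) + 1) :=
                  Finset.sum_congr rfl (fun a _ => hsum0 a)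
              _ = (∑ a, (r' a : ℕ)) + (q + 1) := by
                  rw [Finset.sum_add_distrib]
                  simp
          omega
        · exact Qmat_minor_mem S m N α hα q.succ (cbEmb s) c (cbEmb_strictMono s) hc

lemma E_minor_mem (S : Subsemiring R) (m N : ℕ) (α : ℕ → R) (hα : ∀ i, α i ∈ S)
    (p : ℕ) (r c : Fin p → Fin (N+1)) (hr : StrictMono r) (hc : StrictMono c) :
    ((Ofull m N α * Umat m N).submatrix r c).det ∈ S := by
  rw [cauchy_binet]
  refine sum_mem fun s _ => mul_mem ?_ ?_
  · exact Ofull_minor_mem S m N α hα ((∑ a, (r a : ℕ)) + p) p r (cbEmb s) hr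
      (cbEmb_strictMono s) le_rfl
  · exact Umat_minor_mem S m N p (cbEmb s) c (cbEmb_strictMono s) hc

end TPMachinery

section Correspondence

variable {R : Type*} [CommRing R]

lemma Q_pow_mul_U (m N : ℕ) (α : ℕ → R) :
    ∀ n : ℕ, (Qmat m N α) ^ n * Umat m N = Umat m N * (Pmat m N α) ^ n := by
  have hQU : Qmat m N α * Umat m N = Umat m N * Pmat m N α := by
    rw [Qmat, Pmat, mul_assoc]
  intro n
  induction n with
  | zero => rw [pow_zero, pow_zero, one_mul, mul_one]
  | succ n ih =>
    rw [pow_succ, pow_succ, mul_assoc, hQU, ← mul_assoc, ih, mul_assoc]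

lemma UP_eval (m N : ℕ) (α : ℕ → R) :
    ∀ (n j : ℕ) (hj : j + n * m + m ≤ N),
      (Umat m N * (Pmat m N α) ^ n : Matrix (Fin (N+1)) (Fin (N+1)) R) 0 ⟨j, by omega⟩
        = Shat m α n j := by
  intro n
  induction n with
  | zero =>
    intro j hj
    rw [pow_zero, mul_one, Shat_zero]
    show (if (0 : ℕ) ≤ j + m then (1 : R) else 0) = 1
    rw [if_pos (Nat.zero_le _)]
  | succ n ih =>
    intro j hj
    have hstep : (Umat m N * (Pmat m N α) ^ (n + 1) : Matrix (Fin (N+1)) (Fin (N+1)) R)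
        = (Umat m N * (Pmat m N α) ^ n) * Pmat m N α := by
      rw [pow_succ, mul_assoc]
    have hjN : j < N + 1 := by omega
    set W : Matrix (Fin (N+1)) (Fin (N+1)) R := Umat m N * (Pmat m N α) ^ n with hW
    set f : ℕ → R := fun kn => if h : kn < N + 1 then
        W 0 ⟨kn, h⟩ * ((if m ≤ kn then α kn else 0) * (if kn ≤ j + m then (1 : R) else 0))
      else 0 with hf
    have hterm : ∀ k : Fin (N + 1),
        W 0 k * (Pmat m N α) k ⟨j, hjN⟩ = f (k : ℕ) := by
      intro k
      rw [hf]
      simp only [dif_pos k.isLt]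
      congr 1
      rw [Pmat, Dmat, Matrix.diagonal_mul]
      rfl
    rw [hstep, Matrix.mul_apply, Finset.sum_congr rfl (fun k _ => hterm k),
      Fin.sum_univ_eq_sum_range f (N + 1)]
    have hsub : Icc m (j + m) ⊆ range (N + 1) := by
      intro k hk
      rw [Finset.mem_Icc] at hk
      rw [Finset.mem_range]
      omega
    have hvanish : ∀ k ∈ range (N + 1), k ∉ Icc m (j + m) → f k = 0 := by
      intro k hkr hki
      rw [Finset.mem_range] at hkr
      rw [Finset.mem_Icc, not_and_or] at hki
      rw [hf]
      simp only [dif_pos hkr]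
      rcases hki with h | h
      · rw [if_neg h, zero_mul, mul_zero]
      · rw [if_neg h, mul_zero, mul_zero]
    have hval : ∀ k ∈ Icc m (j + m), f k = α k * Shat m α n k := by
      intro k hk
      rw [Finset.mem_Icc] at hk
      have hkN : k < N + 1 := by omega
      rw [hf]
      simp only [dif_pos hkN, if_pos hk.1, if_pos hk.2, mul_one]
      have hx : (n + 1) * m = n * m + m := by ring
      rw [ih k (by omega)]
      ring
    rw [← Finset.sum_subset hsub hvanish, Finset.sum_congr rfl hval, ← Shat_succ m α n j]

lemma E_eval (m N : ℕ) (α : ℕ → R) (n j : ℕ)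
    (hn : n < N + 1) (hj : j + n * m + m ≤ N) :
    (Ofull m N α * Umat m N : Matrix (Fin (N+1)) (Fin (N+1)) R) ⟨n, hn⟩ ⟨j, by omega⟩
      = Shat m α n j := by
  have h1 : (Ofull m N α * Umat m N : Matrix (Fin (N+1)) (Fin (N+1)) R) ⟨n, hn⟩
        (⟨j, by omega⟩ : Fin (N+1))
      = ((Qmat m N α) ^ n * Umat m N : Matrix (Fin (N+1)) (Fin (N+1)) R) 0 ⟨j, by omega⟩ := by
    rw [Matrix.mul_apply, Matrix.mul_apply]
    rfl
  rw [h1, Q_pow_mul_U, UP_eval m N α n j hj]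

end Correspondence

/-- The subsemiring of `ℤ[α]` of polynomials with nonnegative coefficients. -/
noncomputable def NN : Subsemiring (MvPolynomial ℕ ℤ) where
  carrier := {f | ∀ d, 0 ≤ f.coeff d}
  zero_mem' := fun d => by simp
  one_mem' := fun d => by
    rw [MvPolynomial.coeff_one]
    split_ifs <;> norm_num
  add_mem' := fun {a b} ha hb d => by
    rw [MvPolynomial.coeff_add]
    exact add_nonneg (ha d) (hb d)
  mul_mem' := fun {a b} ha hb d => by
    rw [MvPolynomial.coeff_mul]
    exact Finset.sum_nonneg fun x _ => mul_nonneg (ha _) (hb _)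

lemma mem_NN_iff (f : MvPolynomial ℕ ℤ) : f ∈ NN ↔ ∀ d, 0 ≤ f.coeff d := Iff.rfl

lemma X_mem_NN (i : ℕ) : (MvPolynomial.X i : MvPolynomial ℕ ℤ) ∈ NN := by
  rw [mem_NN_iff]
  intro d
  rw [MvPolynomial.coeff_X']
  split_ifs <;> norm_num

/-- The matrix `Ŝ^{(m)} = (Ŝ^{(m)}_{n,j}(α))_{n,j} = (D((m+1)n + j, j))_{n,j}` of modified
`m`-Stieltjes–Rogers polynomials over `ℤ[α]` (the polynomial ring `MvPolynomial ℕ ℤ`, where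
the variable `X i` stands for `α_i`) is coefficientwise totally positive: every minor
(with rows and columns chosen in strictly increasing order) is a polynomial with
nonnegative coefficients. -/
theorem stmt2 (m : ℕ) (hm : 0 < m) (p : ℕ) (hp : 1 ≤ p)
    (ri cj : Fin p → ℕ) (hri : StrictMono ri) (hcj : StrictMono cj) (d : ℕ →₀ ℕ) :
    0 ≤ MvPolynomial.coeff d
        (Matrix.det (Matrix.of fun x y : Fin p =>
          dyckD m (fun i => (MvPolynomial.X i : MvPolynomial ℕ ℤ))
            ((m + 1) * ri x + cj y) (cj y))) := by
  have hp' : p - 1 < p := by omega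
  set α : ℕ → MvPolynomial ℕ ℤ := fun i => MvPolynomial.X i with hαdef
  set J := cj ⟨p - 1, hp'⟩ with hJ
  set I := ri ⟨p - 1, hp'⟩ with hI
  set N := J + I * m + m + I with hN
  have hle_last : ∀ a : Fin p, a ≤ (⟨p - 1, hp'⟩ : Fin p) := by
    intro a
    rw [Fin.le_def]
    have := a.isLt
    simp only []
    omega
  have hri_le : ∀ a, ri a ≤ I := fun a => hri.monotone (hle_last a)
  have hcj_le : ∀ b, cj b ≤ J := fun b => hcj.monotone (hle_last b)
  have hrN : ∀ a, ri a < N + 1 := by intro a; have := hri_le a; omega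
  have hcN : ∀ b, cj b < N + 1 := by intro b; have := hcj_le b; omega
  set r' : Fin p → Fin (N+1) := fun a => ⟨ri a, hrN a⟩ with hr'
  set c' : Fin p → Fin (N+1) := fun b => ⟨cj b, hcN b⟩ with hc'
  have hr'mono : StrictMono r' := fun a b h => by
    simp only [hr', Fin.mk_lt_mk]
    exact hri h
  have hc'mono : StrictMono c' := fun a b h => by
    simp only [hc', Fin.mk_lt_mk]
    exact hcj h
  have hbound : ∀ (x y : Fin p), cj y + ri x * m + m ≤ N := by
    intro x y
    have h1 := hri_le x
    have h2 := hcj_le y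
    have h3 : ri x * m ≤ I * m := Nat.mul_le_mul_right m h1
    omega
  have hmat : (Matrix.of fun x y : Fin p =>
        dyckD m α ((m + 1) * ri x + cj y) (cj y))
      = (Ofull m N α * Umat m N : Matrix (Fin (N+1)) (Fin (N+1)) _).submatrix r' c' := by
    ext x y
    rw [Matrix.submatrix_apply]
    have := E_eval m N α (ri x) (cj y) (hrN x) (hbound x y)
    rw [show r' x = (⟨ri x, hrN x⟩ : Fin (N+1)) from rfl,
      show c' y = (⟨cj y, hcN y⟩ : Fin (N+1)) from rfl, this]
    rfl
  rw [hmat]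
  exact (E_minor_mem NN m N α X_mem_NN p r' c' hr'mono hc'mono) d
end

section
/- Let 0 ≤ r ≤ s with s ≥ 1, let 1 ≤ σ_1 < ⋯ < σ_r ≤ s be integers and set σ_{r+1} = s+1 and Σ = {σ_1,…,σ_r, s+1}. Let K be a field of characteristic zero and a_1, …, a_{r+1}, b_1, …, b_s ∈ K with b_j + q ≠ 0 in K for every integer q ≥ −1 and every 1 ≤ j ≤ s. For k ≥ −1 set a_i^{(k)} = a_i + ⌈(k+1−σ_i)/(s+1)⌉ for 1 ≤ i ≤ r+1 and b_j^{(k)} = b_j + ⌈(k+1−j)/s⌉ for 1 ≤ j ≤ s, and let g_k ∈ K[[t]] be the formal power series with n-th coefficient c_n^{(k)} = ∏_{i=1}^{r+1} (a_i^{(k)})_n / ( n! · ∏_{j=1}^{s} (b_j^{(k)})_n ). For k ∈ ℕ define α_{k+s} ∈ K by: α_{k+s} = − ∏_{i=1}^{r+1} a_i^{(k)} / ( (b_{[k]_s}^{(k)} − 1) · ∏_{j=1}^{s} b_j^{(k)} ) if [k]_{s+1} ∉ Σ; and α_{k+s} = (b_{[k]_s}^{(k)} − a_ℓ^{(k)})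 · ∏_{1≤i≤r+1, i≠ℓ} a_i^{(k)} / ( (b_{[k]_s}^{(k)} − 1) · ∏_{j=1}^{s} b_j^{(k)} ) if [k]_{s+1} = σ_ℓ for some 1 ≤ ℓ ≤ r+1. Then for every k ∈ ℕ, g_k(t) − g_{k−1}(t) = α_{k+s} · t · g_{k+s}(t) in K[[t]]; equivalently, c_0^{(k)} = c_0^{(k−1)} and c_n^{(k)} − c_n^{(k−1)} = α_{k+s} · c_{n−1}^{(k+s)} for all n ≥ 1. -/
open Finset Polynomial

/-- The shifted numerator parameters `a_i^{(k)} = a_i + ⌈(k+1−σ_i)/(s+1)⌉` (case `r ≤ s`). -/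
noncomputable def aShift' {K : Type*} [Field K] (s : ℕ) (sig : ℕ → ℕ) (a : ℕ → K)
    (k : ℤ) (i : ℕ) : K :=
  a i + ((⌈((k + 1 - (sig i : ℤ) : ℤ) : ℚ) / ((s : ℚ) + 1)⌉ : ℤ) : K)

/-- The shifted denominator parameters `b_j^{(k)} = b_j + ⌈(k+1−j)/s⌉` (case `r ≤ s`). -/
noncomputable def bShift' {K : Type*} [Field K] (s : ℕ) (b : ℕ → K) (k : ℤ) (j : ℕ) : K :=
  b j + ((⌈((k + 1 - (j : ℤ) : ℤ) : ℚ) / (s : ℚ)⌉ : ℤ) : K)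

/-- The `n`-th coefficient `c_n^{(k)} = ∏_{i=1}^{r+1} (a_i^{(k)})_n /
(n!·∏_{j=1}^{s} (b_j^{(k)})_n)` of the hypergeometric series `g_k`. -/
noncomputable def hgCoeff' {K : Type*} [Field K] (r s : ℕ) (sig : ℕ → ℕ) (a b : ℕ → K)
    (k : ℤ) (n : ℕ) : K :=
  (∏ i ∈ Finset.Icc 1 (r + 1), (ascPochhammer K n).eval (aShift' s sig a k i)) /
    ((n.factorial : K) *
      ∏ j ∈ Finset.Icc 1 s, (ascPochhammer K n).eval (bShift' s b k j))

/-- `[k]_n`, the unique element of `{1,…,n}` congruent to `k` modulo `n`. -/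
def modIdx (k n : ℕ) : ℕ := ((((k : ℤ) - 1) % (n : ℤ)) + 1).toNat

section Helpers


private lemma myCeil (p q : ℤ) (hq : 0 < q) : ⌈(p:ℚ)/(q:ℚ)⌉ = -((-p) / q) := by
  have hq' : ((q.toNat : ℕ) : ℤ) = q := Int.toNat_of_nonneg hq.le
  have hq'' : ((q.toNat : ℕ) : ℚ) = (q:ℚ) := by exact_mod_cast hq'
  have : ((p:ℚ))/(q:ℚ) = -(((-p : ℤ):ℚ)/((q.toNat : ℕ):ℚ)) := by
    rw [hq'']; push_cast; ring
  rw [this, Int.ceil_neg, Rat.floor_intCast_div_natCast, hq']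

private lemma ediv_pred (a q : ℤ) (hq : 0 < q) :
    (a - 1) / q = if q ∣ a then a/q - 1 else a/q := by
  by_cases hd : q ∣ a
  · obtain ⟨c, rfl⟩ := hd
    have e1 : (q*c - 1)/q = c - 1 := by
      rw [show q*c - 1 = (q-1) + q*(c-1) by ring, Int.add_mul_ediv_left _ _ hq.ne',
          Int.ediv_eq_zero_of_lt (by omega) (by omega)]; ring
    have e2 : (q*c)/q = c := Int.mul_ediv_cancel_left _ hq.ne'
    rw [e1, e2]; simp [dvd_mul_right]
  · have h0 := Int.mul_ediv_add_emod a q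
    have h1 : 0 ≤ a % q := Int.emod_nonneg a hq.ne'
    have h2 : a % q < q := Int.emod_lt_of_pos a hq
    have hz : a % q ≠ 0 := fun h => hd (Int.dvd_of_emod_eq_zero h)
    have e1 : (a-1)/q = a/q := by
      conv_lhs => rw [show a - 1 = (a%q - 1) + q*(a/q) by omega]
      rw [Int.add_mul_ediv_left _ _ hq.ne', Int.ediv_eq_zero_of_lt (by omega) (by omega), zero_add]
    rw [e1, if_neg hd]

private lemma ceil_pred (p q : ℤ) (hq : 0 < q) :
    ⌈(p:ℚ)/(q:ℚ)⌉ = ⌈((p-1:ℤ):ℚ)/(q:ℚ)⌉ + (if q ∣ (p-1) then 1 else 0) := by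
  rw [myCeil _ _ hq, myCeil _ _ hq]
  have : -p = (-(p-1)) - 1 := by ring
  rw [this, ediv_pred _ _ hq]
  have : q ∣ -(p-1) ↔ q ∣ (p-1) := dvd_neg
  by_cases hd : q ∣ (p - 1)
  · rw [if_pos (this.mpr hd), if_pos hd]; ring
  · rw [if_neg (fun h => hd (this.mp h)), if_neg hd]; ring

private lemma ceil_addq (p q : ℤ) (hq : 0 < q) :
    ⌈((p+q:ℤ):ℚ)/(q:ℚ)⌉ = ⌈(p:ℚ)/(q:ℚ)⌉ + 1 := by
  rw [myCeil _ _ hq, myCeil _ _ hq]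
  have : -(p+q) = -p + q * (-1) := by ring
  rw [this, Int.add_mul_ediv_left _ _ hq.ne']; ring

private lemma modIdx_mem' (k m : ℕ) (hm : 0 < m) :
    (1 ≤ modIdx k m ∧ modIdx k m ≤ m) ∧ (m:ℤ) ∣ ((k:ℤ) - modIdx k m) := by
  unfold modIdx
  have h1 : 0 ≤ ((k:ℤ)-1) % m := Int.emod_nonneg _ (by exact_mod_cast hm.ne')
  have h2 : ((k:ℤ)-1) % m < m := Int.emod_lt_of_pos _ (by exact_mod_cast hm)
  have h3 : ((((k:ℤ)-1) % m + 1).toNat : ℤ) = ((k:ℤ)-1) % m + 1 := Int.toNat_of_nonneg (by omega)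
  refine ⟨⟨by omega, by omega⟩, ?_⟩
  rw [h3]
  have h0 := Int.mul_ediv_add_emod ((k:ℤ)-1) m
  exact ⟨((k:ℤ)-1)/m, by omega⟩

private lemma modIdx_eq_iff' (k m v : ℕ) (hm : 0 < m) (hv1 : 1 ≤ v) (hv2 : v ≤ m) :
    modIdx k m = v ↔ (m:ℤ) ∣ ((k:ℤ) - v) := by
  obtain ⟨⟨hm1, hm2⟩, hdvd⟩ := modIdx_mem' k m hm
  constructor
  · rintro rfl; exact hdvd
  · intro h
    have hd2 : (m:ℤ) ∣ ((v:ℤ) - modIdx k m) := by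
      obtain ⟨c1, hc1⟩ := hdvd; obtain ⟨c2, hc2⟩ := h
      exact ⟨c1 - c2, by rw [mul_sub]; linarith⟩
    have : ((v:ℤ) - modIdx k m) = 0 := by
      refine Int.eq_zero_of_abs_lt_dvd hd2 ?_
      rw [abs_lt]; constructor <;> [omega; omega]
    omega

private lemma poch_eval_succ_left {K : Type*} [Field K] (x : K) (n : ℕ) :
    (ascPochhammer K (n+1)).eval x = x * (ascPochhammer K n).eval (x+1) := by
  rw [ascPochhammer_succ_left]
  simp [eval_comp]

private lemma poch_ne_zero {K : Type*} [Field K] (x : K) (h : ∀ t : ℕ, x + t ≠ 0) (n : ℕ) :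
    (ascPochhammer K n).eval x ≠ 0 := by
  induction n with
  | zero => simp
  | succ n ih => rw [ascPochhammer_succ_eval]; exact mul_ne_zero ih (h n)

private lemma aShift_pred {K : Type*} [Field K] (s : ℕ) (sig : ℕ → ℕ) (a : ℕ → K)
    (k : ℤ) (i : ℕ) :
    aShift' s sig a (k-1) i
      = aShift' s sig a k i - (if ((s:ℤ)+1) ∣ (k - sig i) then 1 else 0) := by
  unfold aShift'
  have e1 : ((k - 1 + 1 - (sig i:ℤ) : ℤ):ℚ) = (((k + 1 - (sig i:ℤ)) - 1 : ℤ):ℚ) := by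
    push_cast; ring
  have e2 : ((s:ℚ)+1) = (((s:ℤ)+1 : ℤ):ℚ) := by push_cast; ring
  rw [e1, e2, ceil_pred (k + 1 - (sig i:ℤ)) ((s:ℤ)+1) (by positivity)]
  have e3 : k + 1 - (sig i:ℤ) - 1 = k - sig i := by ring
  rw [e3]
  by_cases hd : ((s:ℤ)+1) ∣ (k - sig i) <;> simp [hd] <;> push_cast <;> ring

private lemma aShift_next {K : Type*} [Field K] (s : ℕ) (sig : ℕ → ℕ) (a : ℕ → K)
    (k : ℤ) (i : ℕ) :
    aShift' s sig a (k + s) i = aShift' s sig a (k-1) i + 1 := by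
  unfold aShift'
  have e1 : ((k + s + 1 - (sig i:ℤ) : ℤ):ℚ) = ((((k - sig i) + ((s:ℤ)+1)) : ℤ):ℚ) := by
    push_cast; ring
  have e1' : ((k - 1 + 1 - (sig i:ℤ) : ℤ):ℚ) = (((k - sig i) : ℤ):ℚ) := by push_cast; ring
  have e2 : ((s:ℚ)+1) = (((s:ℤ)+1 : ℤ):ℚ) := by push_cast; ring
  rw [e1, e1', e2, ceil_addq (k - sig i) ((s:ℤ)+1) (by positivity)]
  push_cast; ring

private lemma bShift_pred {K : Type*} [Field K] (s : ℕ) (hs : 1 ≤ s) (b : ℕ → K)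
    (k : ℤ) (j : ℕ) :
    bShift' s b (k-1) j
      = bShift' s b k j - (if (s:ℤ) ∣ (k - j) then 1 else 0) := by
  unfold bShift'
  have e1 : ((k - 1 + 1 - (j:ℤ) : ℤ):ℚ) = (((k + 1 - (j:ℤ)) - 1 : ℤ):ℚ) := by push_cast; ring
  have e2 : ((s:ℚ)) = (((s:ℤ) : ℤ):ℚ) := by push_cast; ring
  have hs' : (0:ℤ) < (s:ℤ) := by exact_mod_cast hs
  rw [e1, e2, ceil_pred (k + 1 - (j:ℤ)) (s:ℤ) hs']
  have e3 : k + 1 - (j:ℤ) - 1 = k - j := by ring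
  rw [e3]
  by_cases hd : ((s:ℤ)) ∣ (k - j) <;> simp [hd] <;> push_cast <;> ring

private lemma bShift_next {K : Type*} [Field K] (s : ℕ) (hs : 1 ≤ s) (b : ℕ → K)
    (k : ℤ) (j : ℕ) :
    bShift' s b (k + s) j = bShift' s b k j + 1 := by
  unfold bShift'
  have e1 : ((k + s + 1 - (j:ℤ) : ℤ):ℚ) = ((((k + 1 - (j:ℤ)) + (s:ℤ)) : ℤ):ℚ) := by
    push_cast; ring
  have e2 : ((s:ℚ)) = (((s:ℤ) : ℤ):ℚ) := by push_cast; ring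
  have hs' : (0:ℤ) < (s:ℤ) := by exact_mod_cast hs
  rw [e1, e2, ceil_addq (k + 1 - (j:ℤ)) (s:ℤ) hs']
  push_cast; ring

private lemma bShift_factor_ne {K : Type*} [Field K] (s : ℕ) (hs : 1 ≤ s) (b : ℕ → K)
    (hb : ∀ j, 1 ≤ j → j ≤ s → ∀ q : ℤ, -1 ≤ q → b j + (q : K) ≠ 0)
    (m : ℤ) (hm : -1 ≤ m) (j : ℕ) (hj1 : 1 ≤ j) (hj2 : j ≤ s) (t : ℕ) :
    bShift' s b m j + (t:K) ≠ 0 := by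
  have hsQ : (0:ℚ) < (s:ℚ) := by positivity
  have hceil : -1 ≤ ⌈((m + 1 - (j:ℤ) : ℤ):ℚ)/((s:ℚ))⌉ := by
    have h2 : ((-2 : ℤ):ℚ) < ((m + 1 - (j:ℤ) : ℤ):ℚ)/((s:ℚ)) := by
      rw [lt_div_iff₀ hsQ]
      have c1 : (-1:ℚ) ≤ (m:ℚ) := by exact_mod_cast hm
      have c2 : ((j:ℚ)) ≤ (s:ℚ) := by exact_mod_cast hj2
      have c3 : (1:ℚ) ≤ (s:ℚ) := by exact_mod_cast hs
      push_cast
      nlinarith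
    have := Int.lt_ceil.mpr h2
    omega
  unfold bShift'
  set c : ℤ := ⌈((m + 1 - (j:ℤ) : ℤ):ℚ)/((s:ℚ))⌉ with hc
  have h := hb j hj1 hj2 (c + t) (by omega)
  have : b j + (c:K) + (t:K) = b j + ((c + t : ℤ):K) := by push_cast; ring
  rw [this]; exact h

private lemma bShift_poch_ne {K : Type*} [Field K] (s : ℕ) (hs : 1 ≤ s) (b : ℕ → K)
    (hb : ∀ j, 1 ≤ j → j ≤ s → ∀ q : ℤ, -1 ≤ q → b j + (q : K) ≠ 0)
    (m : ℤ) (hm : -1 ≤ m) (j : ℕ) (hj1 : 1 ≤ j) (hj2 : j ≤ s) (n : ℕ) :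
    (ascPochhammer K n).eval (bShift' s b m j) ≠ 0 :=
  poch_ne_zero _ (fun t => bShift_factor_ne s hs b hb m hm j hj1 hj2 t) n

end Helpers

/-- The Euler–Gauss recurrence `g_k − g_{k−1} = α_{k+s}·t·g_{k+s}` for the contiguous
hypergeometric series `g_k` (case `r ≤ s`). -/
theorem stmt9 {K : Type*} [Field K] [CharZero K]
    (r s : ℕ) (hs : 1 ≤ s) (hr : r ≤ s)
    (sig : ℕ → ℕ)
    (hsig1 : ∀ i, 1 ≤ i → i ≤ r → 1 ≤ sig i ∧ sig i ≤ s)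
    (hsig2 : ∀ i i', 1 ≤ i → i < i' → i' ≤ r → sig i < sig i')
    (hsig3 : sig (r + 1) = s + 1)
    (a b : ℕ → K)
    (hb : ∀ j, 1 ≤ j → j ≤ s → ∀ q : ℤ, -1 ≤ q → b j + (q : K) ≠ 0)
    (α : ℕ → K)
    (hα1 : ∀ k : ℕ, (∀ ℓ, 1 ≤ ℓ → ℓ ≤ r + 1 → modIdx k (s + 1) ≠ sig ℓ) →
      α (k + s) =
        -(∏ i ∈ Finset.Icc 1 (r + 1), aShift' s sig a (k : ℤ) i) /
          ((bShift' s b (k : ℤ) (modIdx k s) - 1) *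
            ∏ j ∈ Finset.Icc 1 s, bShift' s b (k : ℤ) j))
    (hα2 : ∀ k ℓ, 1 ≤ ℓ → ℓ ≤ r + 1 → modIdx k (s + 1) = sig ℓ →
      α (k + s) =
        ((bShift' s b (k : ℤ) (modIdx k s) - aShift' s sig a (k : ℤ) ℓ) *
            ∏ i ∈ (Finset.Icc 1 (r + 1)).erase ℓ, aShift' s sig a (k : ℤ) i) /
          ((bShift' s b (k : ℤ) (modIdx k s) - 1) *
            ∏ j ∈ Finset.Icc 1 s, bShift' s b (k : ℤ) j)) :
    ∀ k : ℕ,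
      PowerSeries.mk (hgCoeff' r s sig a b (k : ℤ))
          - PowerSeries.mk (hgCoeff' r s sig a b ((k : ℤ) - 1))
        = PowerSeries.C (R := K) (α (k + s)) * PowerSeries.X *
            PowerSeries.mk (hgCoeff' r s sig a b ((k : ℤ) + s)) := by
  intro k
  ext n
  rw [map_sub, PowerSeries.coeff_mk, PowerSeries.coeff_mk, mul_assoc, PowerSeries.coeff_C_mul]
  obtain ⟨⟨hj01, hj02⟩, hj0dvd⟩ := modIdx_mem' k s hs
  cases n with
  | zero =>
    rw [PowerSeries.coeff_zero_X_mul, mul_zero]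
    simp [hgCoeff', ascPochhammer_zero]
  | succ n =>
    rw [PowerSeries.coeff_succ_X_mul, PowerSeries.coeff_mk]
    simp only [hgCoeff']
    have hk1 : (-1:ℤ) ≤ (k:ℤ) - 1 := by omega
    have hk0 : (-1:ℤ) ≤ (k:ℤ) := by omega
    have hks : (-1:ℤ) ≤ (k:ℤ) + s := by omega
    have hj0mem : modIdx k s ∈ Finset.Icc 1 s := Finset.mem_Icc.mpr ⟨hj01, hj02⟩
    -- B-side shift facts
    have hBprev0 : bShift' s b ((k:ℤ)-1) (modIdx k s) = bShift' s b (k:ℤ) (modIdx k s) - 1 := by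
      rw [bShift_pred s hs b (k:ℤ) (modIdx k s), if_pos hj0dvd]
    have hBprev : ∀ j ∈ (Finset.Icc 1 s).erase (modIdx k s),
        bShift' s b ((k:ℤ)-1) j = bShift' s b (k:ℤ) j := by
      intro j hj
      obtain ⟨hne, hmem⟩ := Finset.mem_erase.mp hj
      obtain ⟨h1, h2⟩ := Finset.mem_Icc.mp hmem
      have hnd : ¬ (s:ℤ) ∣ ((k:ℤ) - j) := by
        intro hdvd
        exact hne (((modIdx_eq_iff' k s j hs h1 h2).mpr hdvd).symm)
      rw [bShift_pred s hs b (k:ℤ) j, if_neg hnd, sub_zero]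
    have hBnext : ∀ j ∈ Finset.Icc 1 s, bShift' s b ((k:ℤ)+s) j = bShift' s b (k:ℤ) j + 1 :=
      fun j _ => bShift_next s hs b (k:ℤ) j
    -- nonzeroness
    have hn1 : ((n:K)+1) ≠ 0 := by
      have : ((n+1 : ℕ):K) ≠ 0 := Nat.cast_ne_zero.mpr (Nat.succ_ne_zero n)
      push_cast at this; exact this
    have hfac0 : ((n.factorial : K)) ≠ 0 := Nat.cast_ne_zero.mpr n.factorial_ne_zero
    have hfacE : (((n+1).factorial : K)) = ((n:K)+1) * (n.factorial : K) := by
      rw [Nat.factorial_succ]; push_cast; ring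
    have hu : (ascPochhammer K n).eval (bShift' s b (k:ℤ) (modIdx k s)) ≠ 0 :=
      bShift_poch_ne s hs b hb _ hk0 _ hj01 hj02 n
    have huN : bShift' s b (k:ℤ) (modIdx k s) + (n:K) ≠ 0 :=
      bShift_factor_ne s hs b hb _ hk0 _ hj01 hj02 n
    have hB1 : bShift' s b (k:ℤ) (modIdx k s) - 1 ≠ 0 := by
      rw [← hBprev0]
      have := bShift_factor_ne s hs b hb ((k:ℤ)-1) hk1 _ hj01 hj02 0
      simpa using this
    have hQB : (∏ j ∈ (Finset.Icc 1 s).erase (modIdx k s),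
        (ascPochhammer K (n+1)).eval (bShift' s b (k:ℤ) j)) ≠ 0 := by
      apply Finset.prod_ne_zero_iff.mpr
      intro j hj
      obtain ⟨-, hmem⟩ := Finset.mem_erase.mp hj
      obtain ⟨h1, h2⟩ := Finset.mem_Icc.mp hmem
      exact bShift_poch_ne s hs b hb _ hk0 _ h1 h2 _
    have hPB : (∏ j ∈ Finset.Icc 1 s, bShift' s b (k:ℤ) j) ≠ 0 := by
      apply Finset.prod_ne_zero_iff.mpr
      intro j hj; obtain ⟨h1, h2⟩ := Finset.mem_Icc.mp hj
      have := bShift_factor_ne s hs b hb _ hk0 _ h1 h2 0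
      simpa using this
    have hPB1 : (∏ j ∈ Finset.Icc 1 s,
        (ascPochhammer K n).eval (bShift' s b (k:ℤ) j + 1)) ≠ 0 := by
      apply Finset.prod_ne_zero_iff.mpr
      intro j hj; obtain ⟨h1, h2⟩ := Finset.mem_Icc.mp hj
      rw [← bShift_next s hs b (k:ℤ) j]
      exact bShift_poch_ne s hs b hb _ hks _ h1 h2 _
    -- B-side product rewrites
    have hprodB : (∏ j ∈ Finset.Icc 1 s, (ascPochhammer K (n+1)).eval (bShift' s b (k:ℤ) j))
        = (ascPochhammer K n).eval (bShift' s b (k:ℤ) (modIdx k s))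
          * (bShift' s b (k:ℤ) (modIdx k s) + n)
          * ∏ j ∈ (Finset.Icc 1 s).erase (modIdx k s),
              (ascPochhammer K (n+1)).eval (bShift' s b (k:ℤ) j) := by
      rw [← Finset.mul_prod_erase _ _ hj0mem, ascPochhammer_succ_eval]
    have hprodBprev : (∏ j ∈ Finset.Icc 1 s,
          (ascPochhammer K (n+1)).eval (bShift' s b ((k:ℤ)-1) j))
        = (bShift' s b (k:ℤ) (modIdx k s) - 1)
          * (ascPochhammer K n).eval (bShift' s b (k:ℤ) (modIdx k s))
          * ∏ j ∈ (Finset.Icc 1 s).erase (modIdx k s),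
              (ascPochhammer K (n+1)).eval (bShift' s b (k:ℤ) j) := by
      rw [← Finset.mul_prod_erase _ _ hj0mem,
        Finset.prod_congr rfl (fun j hj => by rw [hBprev j hj]),
        hBprev0, poch_eval_succ_left, sub_add_cancel]
    have hprodBnext : (∏ j ∈ Finset.Icc 1 s,
          (ascPochhammer K n).eval (bShift' s b ((k:ℤ)+s) j))
        = ∏ j ∈ Finset.Icc 1 s, (ascPochhammer K n).eval (bShift' s b (k:ℤ) j + 1) :=
      Finset.prod_congr rfl (fun j hj => by rw [hBnext j hj])
    have hrel : (∏ j ∈ Finset.Icc 1 s, bShift' s b (k:ℤ) j)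
          * (∏ j ∈ Finset.Icc 1 s, (ascPochhammer K n).eval (bShift' s b (k:ℤ) j + 1))
        = (ascPochhammer K n).eval (bShift' s b (k:ℤ) (modIdx k s))
          * (bShift' s b (k:ℤ) (modIdx k s) + n)
          * ∏ j ∈ (Finset.Icc 1 s).erase (modIdx k s),
              (ascPochhammer K (n+1)).eval (bShift' s b (k:ℤ) j) := by
      rw [← hprodB, ← Finset.prod_mul_distrib]
      exact Finset.prod_congr rfl (fun j _ => (poch_eval_succ_left _ _).symm)
    -- sigma bounds
    have hsig_mem : ∀ i ∈ Finset.Icc 1 (r+1), 1 ≤ sig i ∧ sig i ≤ s + 1 := by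
      intro i hi; obtain ⟨h1, h2⟩ := Finset.mem_Icc.mp hi
      rcases eq_or_lt_of_le h2 with h | h
      · rw [h, hsig3]; omega
      · have := hsig1 i h1 (by omega); omega
    by_cases hcase : ∃ ℓ, 1 ≤ ℓ ∧ ℓ ≤ r + 1 ∧ modIdx k (s+1) = sig ℓ
    · -- case [k]_{s+1} = σ_ℓ
      obtain ⟨ℓ, hℓ1, hℓ2, hℓeq⟩ := hcase
      have hℓmem : ℓ ∈ Finset.Icc 1 (r+1) := Finset.mem_Icc.mpr ⟨hℓ1, hℓ2⟩
      obtain ⟨hsℓ1, hsℓ2⟩ := hsig_mem ℓ hℓmem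
      have hdvdℓ : ((s:ℤ)+1) ∣ ((k:ℤ) - sig ℓ) := by
        have := (modIdx_eq_iff' k (s+1) (sig ℓ) (by omega) hsℓ1 hsℓ2).mp hℓeq
        exact_mod_cast this
      have hsig_ne : ∀ i ∈ Finset.Icc 1 (r+1), i ≠ ℓ → sig i ≠ sig ℓ := by
        intro i hi hne heq
        obtain ⟨hi1, hi2⟩ := Finset.mem_Icc.mp hi
        rcases lt_or_gt_of_ne hne with h | h
        · by_cases hℓr : ℓ ≤ r
          · exact absurd heq (ne_of_lt (hsig2 i ℓ hi1 h hℓr))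
          · have hℓe : ℓ = r + 1 := by omega
            rw [hℓe, hsig3] at heq
            have := (hsig1 i hi1 (by omega)).2; omega
        · by_cases hir : i ≤ r
          · exact absurd heq.symm (ne_of_lt (hsig2 ℓ i hℓ1 h hir))
          · have hie : i = r + 1 := by omega
            rw [hie, hsig3] at heq
            have := (hsig1 ℓ hℓ1 (by omega)).2; omega
      have hndvd : ∀ i ∈ (Finset.Icc 1 (r+1)).erase ℓ, ¬ ((s:ℤ)+1) ∣ ((k:ℤ) - sig i) := by
        intro i hi hdvd
        obtain ⟨hne, hmem⟩ := Finset.mem_erase.mp hi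
        obtain ⟨hs1, hs2⟩ := hsig_mem i hmem
        have : modIdx k (s+1) = sig i :=
          (modIdx_eq_iff' k (s+1) (sig i) (by omega) hs1 hs2).mpr (by exact_mod_cast hdvd)
        exact hsig_ne i hmem hne (by omega)
      -- A-side shift facts
      have hAprevℓ : aShift' s sig a ((k:ℤ)-1) ℓ = aShift' s sig a (k:ℤ) ℓ - 1 := by
        rw [aShift_pred, if_pos hdvdℓ]
      have hAprev : ∀ i ∈ (Finset.Icc 1 (r+1)).erase ℓ,
          aShift' s sig a ((k:ℤ)-1) i = aShift' s sig a (k:ℤ) i := by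
        intro i hi
        rw [aShift_pred, if_neg (hndvd i hi), sub_zero]
      have hAnextℓ : aShift' s sig a ((k:ℤ)+s) ℓ = aShift' s sig a (k:ℤ) ℓ := by
        rw [aShift_next, hAprevℓ]; ring
      have hAnext : ∀ i ∈ (Finset.Icc 1 (r+1)).erase ℓ,
          aShift' s sig a ((k:ℤ)+s) i = aShift' s sig a (k:ℤ) i + 1 := by
        intro i hi
        rw [aShift_next, hAprev i hi]
      -- A-side product rewrites
      have hprodA : (∏ i ∈ Finset.Icc 1 (r+1),
            (ascPochhammer K (n+1)).eval (aShift' s sig a (k:ℤ) i))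
          = (ascPochhammer K n).eval (aShift' s sig a (k:ℤ) ℓ)
            * (aShift' s sig a (k:ℤ) ℓ + n)
            * ∏ i ∈ (Finset.Icc 1 (r+1)).erase ℓ,
                (ascPochhammer K (n+1)).eval (aShift' s sig a (k:ℤ) i) := by
        rw [← Finset.mul_prod_erase _ _ hℓmem, ascPochhammer_succ_eval]
      have hprodAprev : (∏ i ∈ Finset.Icc 1 (r+1),
            (ascPochhammer K (n+1)).eval (aShift' s sig a ((k:ℤ)-1) i))
          = (aShift' s sig a (k:ℤ) ℓ - 1)
            * (ascPochhammer K n).eval (aShift' s sig a (k:ℤ) ℓ)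
            * ∏ i ∈ (Finset.Icc 1 (r+1)).erase ℓ,
                (ascPochhammer K (n+1)).eval (aShift' s sig a (k:ℤ) i) := by
        rw [← Finset.mul_prod_erase _ _ hℓmem,
          Finset.prod_congr rfl (fun i hi => by rw [hAprev i hi]),
          hAprevℓ, poch_eval_succ_left, sub_add_cancel]
      have hQA : (∏ i ∈ (Finset.Icc 1 (r+1)).erase ℓ,
            (ascPochhammer K (n+1)).eval (aShift' s sig a (k:ℤ) i))
          = (∏ i ∈ (Finset.Icc 1 (r+1)).erase ℓ, aShift' s sig a (k:ℤ) i)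
            * ∏ i ∈ (Finset.Icc 1 (r+1)).erase ℓ,
                (ascPochhammer K n).eval (aShift' s sig a (k:ℤ) i + 1) := by
        rw [← Finset.prod_mul_distrib]
        exact Finset.prod_congr rfl (fun i _ => poch_eval_succ_left _ _)
      have hprodAnext : (∏ i ∈ Finset.Icc 1 (r+1),
            (ascPochhammer K n).eval (aShift' s sig a ((k:ℤ)+s) i))
          = (ascPochhammer K n).eval (aShift' s sig a (k:ℤ) ℓ)
            * ∏ i ∈ (Finset.Icc 1 (r+1)).erase ℓ,
                (ascPochhammer K n).eval (aShift' s sig a (k:ℤ) i + 1) := by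
        rw [← Finset.mul_prod_erase _ _ hℓmem,
          Finset.prod_congr rfl (fun i hi => by rw [hAnext i hi]), hAnextℓ]
      rw [hα2 k ℓ hℓ1 hℓ2 hℓeq, hprodAprev, hprodA, hprodAnext, hprodB, hprodBprev,
        hprodBnext, hQA, hfacE]
      rw [div_sub_div _ _
          (mul_ne_zero (mul_ne_zero hn1 hfac0) (mul_ne_zero (mul_ne_zero hu huN) hQB))
          (mul_ne_zero (mul_ne_zero hn1 hfac0) (mul_ne_zero (mul_ne_zero hB1 hu) hQB)),
        div_mul_div_comm,
        div_eq_div_iff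
          (mul_ne_zero
            (mul_ne_zero (mul_ne_zero hn1 hfac0) (mul_ne_zero (mul_ne_zero hu huN) hQB))
            (mul_ne_zero (mul_ne_zero hn1 hfac0) (mul_ne_zero (mul_ne_zero hB1 hu) hQB)))
          (mul_ne_zero (mul_ne_zero hB1 hPB) (mul_ne_zero hfac0 hPB1))]
      linear_combination (((n:K)+1)^2 * ((n.factorial : K))^2
          * (ascPochhammer K n).eval (aShift' s sig a (k:ℤ) ℓ)
          * (∏ i ∈ (Finset.Icc 1 (r+1)).erase ℓ, aShift' s sig a (k:ℤ) i)
          * (∏ i ∈ (Finset.Icc 1 (r+1)).erase ℓ,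
              (ascPochhammer K n).eval (aShift' s sig a (k:ℤ) i + 1))
          * (ascPochhammer K n).eval (bShift' s b (k:ℤ) (modIdx k s))
          * (∏ j ∈ (Finset.Icc 1 s).erase (modIdx k s),
              (ascPochhammer K (n+1)).eval (bShift' s b (k:ℤ) j))
          * (bShift' s b (k:ℤ) (modIdx k s) - aShift' s sig a (k:ℤ) ℓ)
          * (bShift' s b (k:ℤ) (modIdx k s) - 1)) * hrel
    · -- case [k]_{s+1} ∉ Σ
      push_neg at hcase
      have hns : ∀ ℓ, 1 ≤ ℓ → ℓ ≤ r + 1 → modIdx k (s+1) ≠ sig ℓ := hcase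
      have hndvd : ∀ i ∈ Finset.Icc 1 (r+1), ¬ ((s:ℤ)+1) ∣ ((k:ℤ) - sig i) := by
        intro i hi hdvd
        obtain ⟨h1, h2⟩ := Finset.mem_Icc.mp hi
        obtain ⟨hs1, hs2⟩ := hsig_mem i hi
        have : modIdx k (s+1) = sig i :=
          (modIdx_eq_iff' k (s+1) (sig i) (by omega) hs1 hs2).mpr (by exact_mod_cast hdvd)
        exact hns i h1 h2 this
      have hAprev : ∀ i ∈ Finset.Icc 1 (r+1),
          aShift' s sig a ((k:ℤ)-1) i = aShift' s sig a (k:ℤ) i := by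
        intro i hi
        rw [aShift_pred, if_neg (hndvd i hi), sub_zero]
      have hAnext : ∀ i ∈ Finset.Icc 1 (r+1),
          aShift' s sig a ((k:ℤ)+s) i = aShift' s sig a (k:ℤ) i + 1 := by
        intro i hi
        rw [aShift_next, hAprev i hi]
      have hprodAprev : (∏ i ∈ Finset.Icc 1 (r+1),
            (ascPochhammer K (n+1)).eval (aShift' s sig a ((k:ℤ)-1) i))
          = ∏ i ∈ Finset.Icc 1 (r+1),
              (ascPochhammer K (n+1)).eval (aShift' s sig a (k:ℤ) i) :=
        Finset.prod_congr rfl (fun i hi => by rw [hAprev i hi])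
      have hprodA1 : (∏ i ∈ Finset.Icc 1 (r+1),
            (ascPochhammer K (n+1)).eval (aShift' s sig a (k:ℤ) i))
          = (∏ i ∈ Finset.Icc 1 (r+1), aShift' s sig a (k:ℤ) i)
            * ∏ i ∈ Finset.Icc 1 (r+1),
                (ascPochhammer K n).eval (aShift' s sig a (k:ℤ) i + 1) := by
        rw [← Finset.prod_mul_distrib]
        exact Finset.prod_congr rfl (fun i _ => poch_eval_succ_left _ _)
      have hprodAnext : (∏ i ∈ Finset.Icc 1 (r+1),
            (ascPochhammer K n).eval (aShift' s sig a ((k:ℤ)+s) i))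
          = ∏ i ∈ Finset.Icc 1 (r+1),
              (ascPochhammer K n).eval (aShift' s sig a (k:ℤ) i + 1) :=
        Finset.prod_congr rfl (fun i hi => by rw [hAnext i hi])
      rw [hα1 k hns, hprodAprev, hprodA1, hprodAnext, hprodB, hprodBprev, hprodBnext, hfacE]
      rw [div_sub_div _ _
          (mul_ne_zero (mul_ne_zero hn1 hfac0) (mul_ne_zero (mul_ne_zero hu huN) hQB))
          (mul_ne_zero (mul_ne_zero hn1 hfac0) (mul_ne_zero (mul_ne_zero hB1 hu) hQB)),
        div_mul_div_comm,
        div_eq_div_iff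
          (mul_ne_zero
            (mul_ne_zero (mul_ne_zero hn1 hfac0) (mul_ne_zero (mul_ne_zero hu huN) hQB))
            (mul_ne_zero (mul_ne_zero hn1 hfac0) (mul_ne_zero (mul_ne_zero hB1 hu) hQB)))
          (mul_ne_zero (mul_ne_zero hB1 hPB) (mul_ne_zero hfac0 hPB1))]
      linear_combination (-(((n:K)+1)^2 * ((n.factorial : K))^2
          * (∏ i ∈ Finset.Icc 1 (r+1), aShift' s sig a (k:ℤ) i)
          * (∏ i ∈ Finset.Icc 1 (r+1),
              (ascPochhammer K n).eval (aShift' s sig a (k:ℤ) i + 1))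
          * (ascPochhammer K n).eval (bShift' s b (k:ℤ) (modIdx k s))
          * (∏ j ∈ (Finset.Icc 1 s).erase (modIdx k s),
              (ascPochhammer K (n+1)).eval (bShift' s b (k:ℤ) j))
          * (bShift' s b (k:ℤ) (modIdx k s) - 1))) * hrel
end
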